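/- Fix a prime p, a matrix B(x) ∈ M_n(𝔽_p(x)), and the additive map Δ: 𝔽_p(x)^n → 𝔽_p(x)^n, F ↦ F' + B(x)·F. Then the p-th iterate Δ^p is 𝔽_p(x)-linear: for all α ∈ 𝔽_p(x) and F ∈ 𝔽_p(x)^n, Δ^p(α·F) = α·Δ^p(F). -/

import Mathlib

open Polynomial

/-- Formal derivative of a rational function, via the quotient rule on the
canonical numerator/denominator representation. -/
noncomputable def rderiv {F : Type*} [Field F] (f : RatFunc F) : RatFunc F :=
  algebraMap (Polynomial F) (RatFunc F)
      (Polynomial.derivative f.num * f.denom - f.num * Polynomial.derivative f.denom) /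
    algebraMap (Polynomial F) (RatFunc F) (f.denom ^ 2)

section Aux

open RatFunc

set_option synthInstance.maxHeartbeats 1000000
set_option maxHeartbeats 1000000

variable {K : Type*} [Field K]

lemma rderiv_eq_of_div (a b : K[X]) (hb : b ≠ 0) :
    rderiv (algebraMap K[X] (RatFunc K) a / algebraMap K[X] (RatFunc K) b) =
      algebraMap K[X] (RatFunc K) (derivative a * b - a * derivative b) /
        algebraMap K[X] (RatFunc K) (b ^ 2) := by
  set f := algebraMap K[X] (RatFunc K) a / algebraMap K[X] (RatFunc K) b with hf
  have hd : f.denom ≠ 0 := denom_ne_zero f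
  have hb' : algebraMap K[X] (RatFunc K) b ≠ 0 := algebraMap_ne_zero hb
  have hd' : algebraMap K[X] (RatFunc K) f.denom ≠ 0 := algebraMap_ne_zero hd
  have h1 : algebraMap K[X] (RatFunc K) f.num / algebraMap K[X] (RatFunc K) f.denom = f :=
    num_div_denom f
  have hrel : a * f.denom = f.num * b := by
    apply RatFunc.algebraMap_injective K
    rw [map_mul, map_mul]
    have h2 : algebraMap K[X] (RatFunc K) a / algebraMap K[X] (RatFunc K) b
        = algebraMap K[X] (RatFunc K) f.num / algebraMap K[X] (RatFunc K) f.denom :=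
      hf.symm.trans h1.symm
    rw [div_eq_div_iff hb' hd'] at h2
    linear_combination h2
  have hrel' : derivative a * f.denom + a * derivative f.denom
      = derivative f.num * b + f.num * derivative b := by
    have := congrArg derivative hrel
    rwa [derivative_mul, derivative_mul] at this
  have hkey : (derivative a * b - a * derivative b) * f.denom ^ 2
      = (derivative f.num * f.denom - f.num * derivative f.denom) * b ^ 2 := by
    linear_combination (b * f.denom) * hrel'
      - (derivative b * f.denom + b * derivative f.denom) * hrel
  rw [rderiv, div_eq_div_iff (algebraMap_ne_zero (pow_ne_zero 2 hd))
    (algebraMap_ne_zero (pow_ne_zero 2 hb))]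
  rw [← map_mul, ← map_mul]
  exact congrArg _ (by linear_combination -hkey)

lemma rderiv_algebraMap (q : K[X]) :
    rderiv (algebraMap K[X] (RatFunc K) q) = algebraMap K[X] (RatFunc K) (derivative q) := by
  have := rderiv_eq_of_div q 1 one_ne_zero
  simpa using this

lemma rderiv_add (f g : RatFunc K) : rderiv (f + g) = rderiv f + rderiv g := by
  have hf : f = algebraMap K[X] (RatFunc K) f.num / algebraMap K[X] (RatFunc K) f.denom :=
    (num_div_denom f).symm
  have hg : g = algebraMap K[X] (RatFunc K) g.num / algebraMap K[X] (RatFunc K) g.denom :=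
    (num_div_denom g).symm
  have hdf : algebraMap K[X] (RatFunc K) f.denom ≠ 0 := algebraMap_ne_zero (denom_ne_zero f)
  have hdg : algebraMap K[X] (RatFunc K) g.denom ≠ 0 := algebraMap_ne_zero (denom_ne_zero g)
  have hf' : f * algebraMap K[X] (RatFunc K) f.denom = algebraMap K[X] (RatFunc K) f.num := by
    have := div_mul_cancel₀ (algebraMap K[X] (RatFunc K) f.num) hdf
    rwa [num_div_denom] at this
  have hg' : g * algebraMap K[X] (RatFunc K) g.denom = algebraMap K[X] (RatFunc K) g.num := by
    have := div_mul_cancel₀ (algebraMap K[X] (RatFunc K) g.num) hdg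
    rwa [num_div_denom] at this
  have hsum : f + g = algebraMap K[X] (RatFunc K) (f.num * g.denom + g.num * f.denom) /
      algebraMap K[X] (RatFunc K) (f.denom * g.denom) := by
    rw [map_add, map_mul, map_mul, map_mul, eq_div_iff (mul_ne_zero hdf hdg)]
    linear_combination (algebraMap K[X] (RatFunc K) g.denom) * hf'
      + (algebraMap K[X] (RatFunc K) f.denom) * hg'
  conv_lhs => rw [hsum,
    rderiv_eq_of_div _ _ (mul_ne_zero (denom_ne_zero f) (denom_ne_zero g))]
  rw [rderiv, rderiv]
  simp only [derivative_add, derivative_mul, map_add, map_mul, map_sub, map_pow]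
  field_simp
  ring

lemma rderiv_mul (f g : RatFunc K) : rderiv (f * g) = rderiv f * g + f * rderiv g := by
  have hf : f = algebraMap K[X] (RatFunc K) f.num / algebraMap K[X] (RatFunc K) f.denom :=
    (num_div_denom f).symm
  have hg : g = algebraMap K[X] (RatFunc K) g.num / algebraMap K[X] (RatFunc K) g.denom :=
    (num_div_denom g).symm
  have hdf : algebraMap K[X] (RatFunc K) f.denom ≠ 0 := algebraMap_ne_zero (denom_ne_zero f)
  have hdg : algebraMap K[X] (RatFunc K) g.denom ≠ 0 := algebraMap_ne_zero (denom_ne_zero g)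
  have hf' : f * algebraMap K[X] (RatFunc K) f.denom = algebraMap K[X] (RatFunc K) f.num := by
    have := div_mul_cancel₀ (algebraMap K[X] (RatFunc K) f.num) hdf
    rwa [num_div_denom] at this
  have hg' : g * algebraMap K[X] (RatFunc K) g.denom = algebraMap K[X] (RatFunc K) g.num := by
    have := div_mul_cancel₀ (algebraMap K[X] (RatFunc K) g.num) hdg
    rwa [num_div_denom] at this
  have hmul : f * g = algebraMap K[X] (RatFunc K) (f.num * g.num) /
      algebraMap K[X] (RatFunc K) (f.denom * g.denom) := by
    rw [map_mul, map_mul, eq_div_iff (mul_ne_zero hdf hdg)]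
    linear_combination (g * algebraMap K[X] (RatFunc K) g.denom) * hf'
      + (algebraMap K[X] (RatFunc K) f.num) * hg'
  conv_lhs => rw [hmul,
    rderiv_eq_of_div _ _ (mul_ne_zero (denom_ne_zero f) (denom_ne_zero g))]
  rw [rderiv, rderiv]
  simp only [derivative_mul, map_add, map_mul, map_sub, map_pow]
  generalize algebraMap K[X] (RatFunc K) f.num = a at *
  generalize algebraMap K[X] (RatFunc K) f.denom = b at *
  generalize algebraMap K[X] (RatFunc K) g.num = c at *
  generalize algebraMap K[X] (RatFunc K) g.denom = d at *
  subst hf hg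
  field_simp
  ring

open Finset in
lemma iterate_leibniz {M : Type*} [AddCommGroup M] [Module (RatFunc K) M] (D : M →+ M)
    (hs : ∀ (c : RatFunc K) (x : M), D (c • x) = c • D x + rderiv c • x)
    (k : ℕ) (c : RatFunc K) (x : M) :
    (⇑D)^[k] (c • x) = ∑ i ∈ range (k + 1),
      k.choose i • (rderiv^[i] c • (⇑D)^[k - i] x) := by
  induction k with
  | zero => simp
  | succ k IH =>
    have step : ∀ i, D (k.choose i • (rderiv^[i] c • (⇑D)^[k - i] x))
        = k.choose i • (rderiv^[i] c • (⇑D)^[k - i + 1] x)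
          + k.choose i • (rderiv^[i + 1] c • (⇑D)^[k - i] x) := by
      intro i
      rw [map_nsmul, hs, ← Function.iterate_succ_apply' (⇑D),
        ← Function.iterate_succ_apply' rderiv, smul_add]
    rw [Function.iterate_succ_apply', IH, map_sum]
    simp_rw [step, sum_add_distrib]
    rw [sum_range_succ' (fun i => (k + 1).choose i • (rderiv^[i] c • (⇑D)^[k + 1 - i] x)) (k + 1)]
    simp_rw [Nat.choose_succ_succ, Nat.succ_sub_succ, add_smul, sum_add_distrib]
    have e1 : ∑ i ∈ range (k + 1), k.choose i • (rderiv^[i] c • (⇑D)^[k - i + 1] x)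
        = (∑ i ∈ range (k + 1), k.choose (i + 1) • (rderiv^[i + 1] c • (⇑D)^[k - i] x))
          + (k + 1).choose 0 • (rderiv^[0] c • (⇑D)^[k + 1 - 0] x) := by
      rw [sum_range_succ' (fun i => k.choose i • (rderiv^[i] c • (⇑D)^[k - i + 1] x)) k]
      rw [sum_range_succ (fun i => k.choose (i + 1) • (rderiv^[i + 1] c • (⇑D)^[k - i] x)) k]
      simp only [Nat.choose_succ_self, zero_smul, add_zero, Nat.choose_zero_right,
        Nat.sub_zero, Nat.sub_self]
      congr 1
      refine Finset.sum_congr rfl fun i hi => ?_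
      rw [Finset.mem_range] at hi
      have h2 : k - (i + 1) + 1 = k - i := by omega
      rw [h2]
    rw [e1]
    abel

lemma iterate_rderiv_algebraMap (k : ℕ) (q : K[X]) :
    rderiv^[k] (algebraMap K[X] (RatFunc K) q)
      = algebraMap K[X] (RatFunc K) (derivative^[k] q) := by
  induction k generalizing q with
  | zero => rfl
  | succ k IH =>
    rw [Function.iterate_succ_apply, Function.iterate_succ_apply, rderiv_algebraMap, IH]

lemma iterate_derivative_p_zero (p : ℕ) [Fact p.Prime] (q : (ZMod p)[X]) :
    derivative^[p] q = 0 := by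
  ext m
  rw [Polynomial.coeff_iterate_derivative, Polynomial.coeff_zero, nsmul_eq_mul]
  have hdvd : p ∣ (m + p).descFactorial p := by
    rw [Nat.descFactorial_eq_factorial_mul_choose]
    exact Dvd.dvd.mul_right (Nat.dvd_factorial (Fact.out (p := p.Prime)).pos le_rfl) _
  rw [(ZMod.natCast_eq_zero_iff _ p).mpr hdvd, zero_mul]

open Finset in
lemma iterate_p_smul (p : ℕ) [Fact p.Prime] {M : Type*} [AddCommGroup M]
    [Module (RatFunc (ZMod p)) M] (D : M →+ M)
    (hs : ∀ (c : RatFunc (ZMod p)) (x : M), D (c • x) = c • D x + rderiv c • x)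
    (c : RatFunc (ZMod p)) (x : M) :
    (⇑D)^[p] (c • x) = c • (⇑D)^[p] x + rderiv^[p] c • x := by
  have hp : p.Prime := Fact.out
  haveI : CharP (RatFunc (ZMod p)) p :=
    charP_of_injective_algebraMap
      (algebraMap (ZMod p) (RatFunc (ZMod p))).injective p
  rw [iterate_leibniz D hs p c x, sum_range_succ]
  have h0 : ∑ i ∈ range p, p.choose i • (rderiv^[i] c • (⇑D)^[p - i] x)
      = p.choose 0 • (rderiv^[0] c • (⇑D)^[p - 0] x) := by
    refine Finset.sum_eq_single 0 (fun i hi hne => ?_)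
      (fun h => absurd (Finset.mem_range.mpr hp.pos) h)
    rw [← Nat.cast_smul_eq_nsmul (RatFunc (ZMod p)),
      (CharP.cast_eq_zero_iff (RatFunc (ZMod p)) p _).mpr
        (hp.dvd_choose_self hne (Finset.mem_range.mp hi)), zero_smul]
  rw [h0]
  simp

noncomputable def rderivHom : RatFunc K →+ RatFunc K := AddMonoidHom.mk' rderiv rderiv_add

@[simp] lemma rderivHom_apply (f : RatFunc K) : rderivHom f = rderiv f := rfl

lemma rderivHom_smul (a x : RatFunc K) :
    rderivHom (a • x) = a • rderivHom x + rderiv a • x := by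
  simp only [rderivHom_apply, smul_eq_mul, rderiv_mul]
  ring

lemma rderiv_iterate_p (p : ℕ) [Fact p.Prime] (c : RatFunc (ZMod p)) :
    rderiv^[p] c = 0 := by
  have key := iterate_p_smul p rderivHom rderivHom_smul c
    (algebraMap (ZMod p)[X] (RatFunc (ZMod p)) c.denom)
  have hd : algebraMap (ZMod p)[X] (RatFunc (ZMod p)) c.denom ≠ 0 :=
    algebraMap_ne_zero (denom_ne_zero c)
  have hcd : c • algebraMap (ZMod p)[X] (RatFunc (ZMod p)) c.denom
      = algebraMap (ZMod p)[X] (RatFunc (ZMod p)) c.num := by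
    rw [smul_eq_mul, mul_comm]
    have := div_mul_cancel₀ (algebraMap (ZMod p)[X] (RatFunc (ZMod p)) c.num) hd
    rw [num_div_denom] at this
    rw [mul_comm]
    exact this
  have hDfun : ⇑(rderivHom (K := ZMod p)) = rderiv := rfl
  rw [hDfun, hcd, iterate_rderiv_algebraMap, iterate_rderiv_algebraMap,
    iterate_derivative_p_zero, iterate_derivative_p_zero, map_zero] at key
  rw [smul_zero, zero_add, smul_eq_mul] at key
  rcases mul_eq_zero.mp key.symm with h | h
  · exact h
  · exact absurd h hd

set_option maxHeartbeats 400000 in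
set_option synthInstance.maxHeartbeats 1000000 in
/-- Let `p` be a prime, `B(x) ∈ Mₙ(𝔽_p(x))`, and `Δ : F ↦ F' + B·F` on `𝔽_p(x)ⁿ`
(which is a priori only `𝔽_p(xᵖ)`-linear).  Then the `p`-th iterate `Δ^p`
(the `p`-curvature) is `𝔽_p(x)`-linear:
`Δ^p(α·F) = α·Δ^p(F)` for all `α ∈ 𝔽_p(x)` and `F ∈ 𝔽_p(x)ⁿ`. -/
theorem pCurvature_linear (p : ℕ) [Fact p.Prime] (n : ℕ)
    (B : Matrix (Fin n) (Fin n) (RatFunc (ZMod p)))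
    (α : RatFunc (ZMod p)) (F : Fin n → RatFunc (ZMod p)) :
    (fun G : Fin n → RatFunc (ZMod p) => (fun i => rderiv (G i)) + B.mulVec G)^[p]
        (α • F) =
      α • (fun G : Fin n → RatFunc (ZMod p) =>
        (fun i => rderiv (G i)) + B.mulVec G)^[p] F := by
  set Δ : (Fin n → RatFunc (ZMod p)) → (Fin n → RatFunc (ZMod p)) :=
    fun G => (fun i => rderiv (G i)) + B.mulVec G with hΔ
  have hadd : ∀ G H, Δ (G + H) = Δ G + Δ H := by
    intro G H
    funext i
    simp only [hΔ, Pi.add_apply, Matrix.mulVec_add, rderiv_add]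
    ring
  set D : (Fin n → RatFunc (ZMod p)) →+ (Fin n → RatFunc (ZMod p)) :=
    AddMonoidHom.mk' Δ hadd with hD
  have hDfun : ⇑D = Δ := rfl
  have hs : ∀ (c : RatFunc (ZMod p)) (G : Fin n → RatFunc (ZMod p)),
      D (c • G) = c • D G + rderiv c • G := by
    intro c G
    funext i
    simp only [hD, AddMonoidHom.mk'_apply, hΔ, Pi.add_apply, Pi.smul_apply,
      Matrix.mulVec_smul, smul_eq_mul, rderiv_mul]
    ring
  have key := iterate_p_smul p D hs α F
  rw [hDfun, rderiv_iterate_p, zero_smul, add_zero] at key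
  exact key


end Aux
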